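/- (Replacement) If G and H have options indexed by the same set I, G ≅ {G'_i : i ∈ I}, H ≅ {H'_i : i ∈ I}, and G'_i = H'_i for all i (equality meaning identical outcomes in all sums), then G = H. -/

import Mathlib

inductive IGame : Type where
  | mk : List IGame → IGame

namespace IGame

def opts : IGame → List IGame
  | mk l => l

theorem sizeOf_lt_of_mem {g G : IGame} (h : g ∈ G.opts) : sizeOf g < sizeOf G := by
  cases G with
  | mk l =>
    have h2 : g ∈ l := h
    have := List.sizeOf_lt_of_mem h2
    simp only [mk.sizeOf_spec]
    omega

def add : IGame → IGame → IGame
  | G, H =>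
    mk ((G.opts.attach.map fun g => add g.1 H) ++ (H.opts.attach.map fun h => add G h.1))
termination_by G H => sizeOf G + sizeOf H
decreasing_by
  · have := sizeOf_lt_of_mem g.2; omega
  · have := sizeOf_lt_of_mem h.2; omega

inductive Player : Type where
  | N | O | P
  deriving DecidableEq

def out : IGame → Player → Prop
  | G, .N => ∃ g : {x // x ∈ G.opts}, out g.1 .P
  | G, .O => ∀ g : {x // x ∈ G.opts}, out g.1 .N
  | G, .P => ∀ g : {x // x ∈ G.opts}, out g.1 .O
termination_by G _ => sizeOf G
decreasing_by
  all_goals exact sizeOf_lt_of_mem g.2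

theorem out_N {G : IGame} : out G .N ↔ ∃ g ∈ G.opts, out g .P := by
  rw [out]
  exact ⟨fun ⟨g, h⟩ => ⟨g.1, g.2, h⟩, fun ⟨g, hm, h⟩ => ⟨⟨g, hm⟩, h⟩⟩

theorem out_O {G : IGame} : out G .O ↔ ∀ g ∈ G.opts, out g .N := by
  rw [out]
  exact ⟨fun h g hm => h ⟨g, hm⟩, fun h g => h g.1 g.2⟩

theorem out_P {G : IGame} : out G .P ↔ ∀ g ∈ G.opts, out g .O := by
  rw [out]
  exact ⟨fun h g hm => h ⟨g, hm⟩, fun h g => h g.1 g.2⟩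

def outcome (G : IGame) : Set Player := {p | out G p}

def nim : Nat → IGame
  | 0 => mk []
  | n+1 => mk ((nim n).opts ++ [nim n])

end IGame

namespace IGame

/-- Equality of games: identical outcomes in all disjunctive sums. -/
def eqv (G H : IGame) : Prop :=
  ∀ X : IGame, outcome (add G X) = outcome (add H X)

theorem forall₂_mem_left {α β : Type*} {r : α → β → Prop} {l₁ : List α} {l₂ : List β}
    (h : List.Forall₂ r l₁ l₂) {a : α} (ha : a ∈ l₁) : ∃ b ∈ l₂, r a b := by
  induction h with
  | nil => cases ha
  | cons hr _ ih =>
    rcases List.mem_cons.mp ha with rfl | ha'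
    · exact ⟨_, List.mem_cons_self, hr⟩
    · obtain ⟨b, hb, hrb⟩ := ih ha'
      exact ⟨b, List.mem_cons_of_mem _ hb, hrb⟩

theorem forall₂_mem_right {α β : Type*} {r : α → β → Prop} {l₁ : List α} {l₂ : List β}
    (h : List.Forall₂ r l₁ l₂) {b : β} (hb : b ∈ l₂) : ∃ a ∈ l₁, r a b := by
  induction h with
  | nil => cases hb
  | cons hr _ ih =>
    rcases List.mem_cons.mp hb with rfl | hb'
    · exact ⟨_, List.mem_cons_self, hr⟩
    · obtain ⟨a, ha, hra⟩ := ih hb'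
      exact ⟨a, List.mem_cons_of_mem _ ha, hra⟩

theorem mem_opts_add {y G X : IGame} :
    y ∈ (add G X).opts ↔ (∃ g ∈ G.opts, y = add g X) ∨ (∃ x ∈ X.opts, y = add G x) := by
  rw [add]
  simp only [opts, List.mem_append, List.mem_map, List.mem_attach, true_and]
  constructor
  · rintro (⟨g, rfl⟩ | ⟨x, rfl⟩)
    · exact Or.inl ⟨g.1, g.2, rfl⟩
    · exact Or.inr ⟨x.1, x.2, rfl⟩
  · rintro (⟨g, hg, rfl⟩ | ⟨x, hx, rfl⟩)
    · exact Or.inl ⟨⟨g, hg⟩, rfl⟩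
    · exact Or.inr ⟨⟨x, hx⟩, rfl⟩

theorem eqv_out {g h : IGame} (he : eqv g h) (X : IGame) (p : Player) :
    out (add g X) p ↔ out (add h X) p := by
  constructor
  · intro hp
    have hm : p ∈ outcome (add g X) := hp
    rw [he X] at hm; exact hm
  · intro hp
    have hm : p ∈ outcome (add h X) := hp
    rw [← he X] at hm; exact hm

theorem key (G H : IGame) (h : List.Forall₂ eqv G.opts H.opts) :
    ∀ X : IGame, ∀ p : Player, (out (add G X) p ↔ out (add H X) p) := by
  intro X
  have IH : ∀ x ∈ X.opts, ∀ p, (out (add G x) p ↔ out (add H x) p) := by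
    intro x hx
    have := sizeOf_lt_of_mem hx
    exact key G H h x
  have fwd : ∀ y ∈ (add G X).opts, ∀ p, ∃ z ∈ (add H X).opts, (out y p ↔ out z p) := by
    intro y hy p
    rcases mem_opts_add.mp hy with ⟨g, hg, rfl⟩ | ⟨x, hx, rfl⟩
    · obtain ⟨h', hh', he⟩ := forall₂_mem_left h hg
      exact ⟨add h' X, mem_opts_add.mpr (Or.inl ⟨h', hh', rfl⟩), eqv_out he X p⟩
    · exact ⟨add H x, mem_opts_add.mpr (Or.inr ⟨x, hx, rfl⟩), IH x hx p⟩
  have bwd : ∀ z ∈ (add H X).opts, ∀ p, ∃ y ∈ (add G X).opts, (out y p ↔ out z p) := by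
    intro z hz p
    rcases mem_opts_add.mp hz with ⟨h', hh', rfl⟩ | ⟨x, hx, rfl⟩
    · obtain ⟨g, hg, he⟩ := forall₂_mem_right h hh'
      exact ⟨add g X, mem_opts_add.mpr (Or.inl ⟨g, hg, rfl⟩), eqv_out he X p⟩
    · exact ⟨add G x, mem_opts_add.mpr (Or.inr ⟨x, hx, rfl⟩), IH x hx p⟩
  intro p
  cases p with
  | N =>
    rw [out_N, out_N]
    constructor
    · rintro ⟨y, hy, hp⟩
      obtain ⟨z, hz, hiff⟩ := fwd y hy .P
      exact ⟨z, hz, hiff.mp hp⟩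
    · rintro ⟨z, hz, hp⟩
      obtain ⟨y, hy, hiff⟩ := bwd z hz .P
      exact ⟨y, hy, hiff.mpr hp⟩
  | O =>
    rw [out_O, out_O]
    constructor
    · intro hall z hz
      obtain ⟨y, hy, hiff⟩ := bwd z hz .N
      exact hiff.mp (hall y hy)
    · intro hall y hy
      obtain ⟨z, hz, hiff⟩ := fwd y hy .N
      exact hiff.mpr (hall z hz)
  | P =>
    rw [out_P, out_P]
    constructor
    · intro hall z hz
      obtain ⟨y, hy, hiff⟩ := bwd z hz .O
      exact hiff.mp (hall y hy)
    · intro hall y hy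
      obtain ⟨z, hz, hiff⟩ := fwd y hy .O
      exact hiff.mpr (hall z hz)
termination_by X => sizeOf X

/-- (Replacement) If the options of `G` and `H` correspond pairwise under
equality, then `G = H`. -/
theorem replacement (G H : IGame) (h : List.Forall₂ eqv G.opts H.opts) :
    eqv G H := by
  intro X
  exact Set.ext fun p => key G H h X p

end IGame
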